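/- arXiv:2510.20372 — 2 statements merged into one kernel-verified Lean document; each statement's English description precedes it below -/
import Mathlib

section
/- Let $X$ and $Y$ be independent nonnegative random variables with regularly varying survival functions of the same index $-a < 0$. Then $\mathbb{P}(X + Y > t) \sim \mathbb{P}(X > t) + \mathbb{P}(Y > t)$ as $t \to \infty$, and hence $X+Y$ has a regularly varying tail of index $-a$. -/
open MeasureTheory ProbabilityTheory Filter

lemma tail_to_zero {Ω : Type*} [MeasureSpace Ω] (P : Measure Ω) [IsProbabilityMeasure P]
    (X : Ω → ℝ) (hX : Measurable X) :
    Tendsto (fun t : ℝ => (P {ω | X ω > t}).toReal) atTop (nhds 0) := by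
  have h1 : Tendsto (fun t : ℝ => P {ω | X ω > t}) atTop
      (nhds (P (⋂ t : ℝ, {ω | X ω > t}))) := by
    apply tendsto_measure_iInter_atTop
    · intro t; exact (hX measurableSet_Ioi).nullMeasurableSet
    · intro s t hst ω hω; exact lt_of_le_of_lt hst hω
    · exact ⟨0, measure_ne_top P _⟩
  have h2 : (⋂ t : ℝ, {ω | X ω > t}) = ∅ := by
    ext ω
    simp only [Set.mem_iInter, Set.mem_setOf_eq, Set.mem_empty_iff_false, iff_false, not_forall,
      not_lt]
    exact ⟨X ω, le_refl _⟩
  rw [h2, measure_empty] at h1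
  have h3 := (ENNReal.tendsto_toReal (by simp)).comp h1
  simpa [Function.comp_def] using h3

lemma rv_ratio (f L : ℝ → ℝ) (a : ℝ) (hLpos : ∀ t > 0, 0 < L t)
    (hSV : ∀ l > 0, Tendsto (fun t => L (l * t) / L t) atTop (nhds 1))
    (hf : ∀ t > 0, f t = t ^ (-a) * L t) (l : ℝ) (hl : 0 < l) :
    Tendsto (fun t => f (l * t) / f t) atTop (nhds (l ^ (-a))) := by
  have h := (hSV l hl).const_mul (l ^ (-a) : ℝ)
  rw [mul_one] at h
  refine h.congr' ?_
  filter_upwards [eventually_gt_atTop (0:ℝ)] with t ht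
  have hlt : (0:ℝ) < l * t := mul_pos hl ht
  rw [hf _ hlt, hf _ ht, Real.mul_rpow hl.le ht.le]
  have h1 : t ^ (-a) ≠ 0 := (Real.rpow_pos_of_pos ht _).ne'
  have h2 : L t ≠ 0 := (hLpos t ht).ne'
  field_simp

lemma combo (A B wA wB : ℝ → ℝ) (c : ℝ)
    (hA : Tendsto A atTop (nhds c)) (hB : Tendsto B atTop (nhds c))
    (hw : ∀ᶠ t in atTop, 0 ≤ wA t ∧ 0 ≤ wB t ∧ wA t + wB t = 1) :
    Tendsto (fun t => wA t * A t + wB t * B t) atTop (nhds c) := by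
  have habs : Tendsto (fun t => |A t - c| + |B t - c|) atTop (nhds 0) := by
    have := ((hA.sub_const c).abs.add (hB.sub_const c).abs)
    simpa using this
  have hd : Tendsto (fun t => wA t * A t + wB t * B t - c) atTop (nhds 0) := by
    refine squeeze_zero_norm' (a := fun t => |A t - c| + |B t - c|) ?_ habs
    filter_upwards [hw] with t ht
    obtain ⟨h1, h2, h3⟩ := ht
    have heq : wA t * A t + wB t * B t - c = wA t * (A t - c) + wB t * (B t - c) := by
      linear_combination c * h3
    rw [Real.norm_eq_abs, heq]
    calc |wA t * (A t - c) + wB t * (B t - c)|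
        ≤ |wA t * (A t - c)| + |wB t * (B t - c)| := abs_add_le _ _
      _ = wA t * |A t - c| + wB t * |B t - c| := by
          rw [abs_mul, abs_mul, abs_of_nonneg h1, abs_of_nonneg h2]
      _ ≤ 1 * |A t - c| + 1 * |B t - c| :=
          add_le_add (mul_le_mul_of_nonneg_right (by linarith) (abs_nonneg _))
            (mul_le_mul_of_nonneg_right (by linarith) (abs_nonneg _))
      _ = |A t - c| + |B t - c| := by ring
  have := hd.add_const c
  simpa using this

/-- Convolution closure of regularly varying tails: for independent nonnegative
`X, Y` with regularly varying tails of the same index `-a`,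
`P(X+Y>t) ~ P(X>t)+P(Y>t)` and `X+Y` has a regularly varying tail of index `-a`. -/
theorem sum_regularly_varying_tails
    {Ω : Type*} [MeasureSpace Ω] (P : Measure Ω) [IsProbabilityMeasure P]
    (X Y : Ω → ℝ) (hX : Measurable X) (hY : Measurable Y)
    (hXnn : ∀ ω, 0 ≤ X ω) (hYnn : ∀ ω, 0 ≤ Y ω)
    (hindep : IndepFun X Y P)
    (a : ℝ) (ha : 0 < a)
    (LX LY : ℝ → ℝ) (hLXpos : ∀ t > 0, 0 < LX t) (hLYpos : ∀ t > 0, 0 < LY t)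
    (hSVX : ∀ l > 0, Tendsto (fun t => LX (l * t) / LX t) atTop (nhds 1))
    (hSVY : ∀ l > 0, Tendsto (fun t => LY (l * t) / LY t) atTop (nhds 1))
    (htailX : ∀ t > 0, (P {ω | X ω > t}).toReal = t ^ (-a) * LX t)
    (htailY : ∀ t > 0, (P {ω | Y ω > t}).toReal = t ^ (-a) * LY t) :
    Tendsto
      (fun t => (P {ω | X ω + Y ω > t}).toReal /
        ((P {ω | X ω > t}).toReal + (P {ω | Y ω > t}).toReal))
      atTop (nhds 1) ∧
    ∀ l > 0,
      Tendsto
        (fun t => (P {ω | X ω + Y ω > l * t}).toReal /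
          (P {ω | X ω + Y ω > t}).toReal)
        atTop (nhds (l ^ (-a))) := by
  obtain ⟨fX, hfX⟩ : ∃ f : ℝ → ℝ, ∀ t, f t = (P {ω | X ω > t}).toReal := ⟨_, fun _ => rfl⟩
  obtain ⟨fY, hfY⟩ : ∃ f : ℝ → ℝ, ∀ t, f t = (P {ω | Y ω > t}).toReal := ⟨_, fun _ => rfl⟩
  obtain ⟨fS, hfS⟩ : ∃ f : ℝ → ℝ, ∀ t, f t = (P {ω | X ω + Y ω > t}).toReal := ⟨_, fun _ => rfl⟩
  simp only [← hfX, ← hfY, ← hfS] at htailX htailY ⊢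
  -- basic positivity facts
  have hfXpos : ∀ t > 0, 0 < fX t := fun t ht => by
    rw [htailX t ht]; exact mul_pos (Real.rpow_pos_of_pos ht _) (hLXpos t ht)
  have hfYpos : ∀ t > 0, 0 < fY t := fun t ht => by
    rw [htailY t ht]; exact mul_pos (Real.rpow_pos_of_pos ht _) (hLYpos t ht)
  have hfXnn : ∀ t, 0 ≤ fX t := fun t => by rw [hfX]; exact ENNReal.toReal_nonneg
  have hfYnn : ∀ t, 0 ≤ fY t := fun t => by rw [hfY]; exact ENNReal.toReal_nonneg
  have hgpos : ∀ t > 0, 0 < fX t + fY t := fun t ht => add_pos (hfXpos t ht) (hfYpos t ht)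
  -- the Y tail tends to zero
  have hfY0 : Tendsto fY atTop (nhds 0) := by
    have h := tail_to_zero P Y hY
    simp only [← hfY] at h
    exact h
  -- fS dominates fX
  have hfSgeX : ∀ t, fX t ≤ fS t := by
    intro t
    rw [hfX, hfS]
    refine ENNReal.toReal_mono (measure_ne_top _ _) (measure_mono ?_)
    intro ω hω
    exact lt_of_lt_of_le hω (le_add_of_nonneg_right (hYnn ω))
  -- independence gives product formula
  have hind : ∀ s u : ℝ, (P ({ω | X ω > s} ∩ {ω | Y ω > u})).toReal = fX s * fY u := by
    intro s u
    have h := hindep.measure_inter_preimage_eq_mul (Set.Ioi s) (Set.Ioi u)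
      measurableSet_Ioi measurableSet_Ioi
    rw [hfX, hfY, ← ENNReal.toReal_mul]
    exact congrArg ENNReal.toReal h
  -- lower bound
  have hlow : ∀ t, fX t + fY t - fX t * fY t ≤ fS t := by
    intro t
    have hu : (P ({ω | X ω > t} ∪ {ω | Y ω > t})).toReal
        = fX t + fY t - fX t * fY t := by
      have h : P ({ω | X ω > t} ∪ {ω | Y ω > t}) + P ({ω | X ω > t} ∩ {ω | Y ω > t})
          = P {ω | X ω > t} + P {ω | Y ω > t} :=
        measure_union_add_inter (μ := P) _ (hY measurableSet_Ioi)
      have h2 := congrArg ENNReal.toReal h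
      rw [ENNReal.toReal_add (measure_ne_top _ _) (measure_ne_top _ _),
        ENNReal.toReal_add (measure_ne_top _ _) (measure_ne_top _ _), hind,
        ← hfX, ← hfY] at h2
      linarith
    rw [← hu, hfS]
    refine ENNReal.toReal_mono (measure_ne_top _ _) (measure_mono ?_)
    rintro ω (hω | hω)
    · exact lt_of_lt_of_le hω (le_add_of_nonneg_right (hYnn ω))
    · exact lt_of_lt_of_le hω (le_add_of_nonneg_left (hXnn ω))
  -- upper bound
  have hup : ∀ δ t : ℝ, fS t ≤ fX ((1-δ)*t) + fY ((1-δ)*t) + fX (δ*t) * fY (δ*t) := by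
    intro δ t
    have hsub : {ω | X ω + Y ω > t} ⊆ {ω | X ω > (1-δ)*t} ∪ {ω | Y ω > (1-δ)*t}
        ∪ ({ω | X ω > δ*t} ∩ {ω | Y ω > δ*t}) := by
      intro ω hω
      simp only [Set.mem_setOf_eq, Set.mem_union, Set.mem_inter_iff] at *
      by_cases h1 : X ω > (1-δ)*t
      · exact Or.inl (Or.inl h1)
      by_cases h2 : Y ω > (1-δ)*t
      · exact Or.inl (Or.inr h2)
      push_neg at h1 h2
      exact Or.inr ⟨by nlinarith, by nlinarith⟩
    have h1 : P {ω | X ω + Y ω > t} ≤ P {ω | X ω > (1-δ)*t} + P {ω | Y ω > (1-δ)*t}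
        + P ({ω | X ω > δ*t} ∩ {ω | Y ω > δ*t}) := by
      refine (measure_mono hsub).trans ?_
      refine (measure_union_le _ _).trans ?_
      exact add_le_add (measure_union_le _ _) le_rfl
    have h2 := ENNReal.toReal_mono (by finiteness) h1
    rw [ENNReal.toReal_add (by finiteness) (by finiteness),
      ENNReal.toReal_add (by finiteness) (by finiteness), hind, ← hfX, ← hfY, ← hfS] at h2
    exact h2
  -- ratio limits for fX and fY
  have hRX : ∀ l > 0, Tendsto (fun t => fX (l*t) / fX t) atTop (nhds (l ^ (-a))) :=
    fun l hl => rv_ratio fX LX a hLXpos hSVX htailX l hl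
  have hRY : ∀ l > 0, Tendsto (fun t => fY (l*t) / fY t) atTop (nhds (l ^ (-a))) :=
    fun l hl => rv_ratio fY LY a hLYpos hSVY htailY l hl
  -- ratio limit for the sum fX + fY
  have hg : ∀ l > 0, Tendsto (fun t => (fX (l*t) + fY (l*t)) / (fX t + fY t)) atTop
      (nhds (l ^ (-a))) := by
    intro l hl
    have hw : ∀ᶠ t in atTop, 0 ≤ fX t / (fX t + fY t) ∧ 0 ≤ fY t / (fX t + fY t) ∧
        fX t / (fX t + fY t) + fY t / (fX t + fY t) = 1 := by
      filter_upwards [eventually_gt_atTop (0:ℝ)] with t ht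
      exact ⟨div_nonneg (hfXnn t) (hgpos t ht).le, div_nonneg (hfYnn t) (hgpos t ht).le,
        by rw [← add_div, div_self (hgpos t ht).ne']⟩
    have hc := combo (fun t => fX (l*t)/fX t) (fun t => fY (l*t)/fY t)
      (fun t => fX t / (fX t + fY t)) (fun t => fY t / (fX t + fY t)) (l ^ (-a))
      (hRX l hl) (hRY l hl) hw
    refine hc.congr' ?_
    filter_upwards [eventually_gt_atTop (0:ℝ)] with t ht
    have h1 : fX t ≠ 0 := (hfXpos t ht).ne'
    have h2 : fY t ≠ 0 := (hfYpos t ht).ne'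
    have h3 : fX t + fY t ≠ 0 := (hgpos t ht).ne'
    field_simp
  -- first conclusion
  have hconc1 : Tendsto (fun t => fS t / (fX t + fY t)) atTop (nhds 1) := by
    rw [Metric.tendsto_nhds]
    intro ε hε
    obtain ⟨δ, hδ0, hδ1, hδε⟩ : ∃ δ : ℝ, 0 < δ ∧ δ < 1 ∧ (1-δ:ℝ) ^ (-a) < 1 + ε/2 := by
      have hcont : Tendsto (fun d : ℝ => (1-d) ^ (-a)) (nhdsWithin 0 (Set.Ioi 0)) (nhds 1) := by
        have h1 : Tendsto (fun d : ℝ => (1:ℝ)-d) (nhds 0) (nhds 1) := by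
          have hc : Continuous (fun d : ℝ => (1:ℝ) - d) := continuous_const.sub continuous_id
          simpa using hc.tendsto 0
        have h2 : ContinuousAt (fun x : ℝ => x ^ (-a)) 1 :=
          Real.continuousAt_rpow_const 1 (-a) (Or.inl one_ne_zero)
        have h3 := h2.tendsto.comp h1
        rw [Real.one_rpow] at h3
        exact h3.mono_left nhdsWithin_le_nhds
      have hev := hcont.eventually_lt_const (by linarith : (1:ℝ) < 1 + ε/2)
      have hd1 : ∀ᶠ d in nhdsWithin (0:ℝ) (Set.Ioi 0), d < 1 :=
        eventually_nhdsWithin_of_eventually_nhds (eventually_lt_nhds one_pos)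
      have hd0 : ∀ᶠ d in nhdsWithin (0:ℝ) (Set.Ioi 0), (0:ℝ) < d := eventually_mem_nhdsWithin
      obtain ⟨δ, ⟨⟨h1, h2⟩, h3⟩⟩ := ((hd0.and hd1).and hev).exists
      exact ⟨δ, h1, h2, h3⟩
    have hA : Tendsto (fun t => (fX ((1-δ)*t) + fY ((1-δ)*t)) / (fX t + fY t)) atTop
        (nhds ((1-δ:ℝ) ^ (-a))) := hg (1-δ) (by linarith)
    have hδt : Tendsto (fun t : ℝ => δ * t) atTop atTop :=
      Tendsto.const_mul_atTop hδ0 tendsto_id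
    have hB : Tendsto (fun t => ((fX (δ*t) + fY (δ*t)) / (fX t + fY t)) * fY (δ*t)) atTop
        (nhds 0) := by
      have := (hg δ hδ0).mul (hfY0.comp hδt)
      simpa using this
    have hAB := hA.add hB
    rw [add_zero] at hAB
    have hevU := hAB.eventually_lt_const (by linarith : (1-δ:ℝ) ^ (-a) < 1 + ε)
    have hevY := hfY0.eventually_lt_const (by linarith : (0:ℝ) < ε/2)
    filter_upwards [hevU, hevY, eventually_gt_atTop (0:ℝ)] with t hU hYe ht
    rw [Real.dist_eq, abs_lt]
    have hgt := hgpos t ht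
    constructor
    · have h1 : 1 - fY t ≤ fS t / (fX t + fY t) := by
        rw [le_div_iff₀ hgt]
        nlinarith [hlow t, sq_nonneg (fY t), hfXnn t, hfYnn t]
      linarith
    · have hnum : fS t ≤ fX ((1-δ)*t) + fY ((1-δ)*t) + (fX (δ*t) + fY (δ*t)) * fY (δ*t) := by
        nlinarith [hup δ t, sq_nonneg (fY (δ*t)), hfYnn (δ*t)]
      have h2 : fS t / (fX t + fY t)
          ≤ (fX ((1-δ)*t) + fY ((1-δ)*t)) / (fX t + fY t)
            + ((fX (δ*t) + fY (δ*t)) / (fX t + fY t)) * fY (δ*t) := by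
        calc fS t / (fX t + fY t)
            ≤ (fX ((1-δ)*t) + fY ((1-δ)*t) + (fX (δ*t) + fY (δ*t)) * fY (δ*t))
              / (fX t + fY t) := by
              gcongr
          _ = (fX ((1-δ)*t) + fY ((1-δ)*t)) / (fX t + fY t)
              + ((fX (δ*t) + fY (δ*t)) / (fX t + fY t)) * fY (δ*t) := by
              rw [add_div, mul_div_right_comm]
      linarith
  have hfSpos : ∀ t > 0, 0 < fS t := fun t ht => lt_of_lt_of_le (hfXpos t ht) (hfSgeX t)
  refine ⟨hconc1, ?_⟩
  intro l hl
  have hlt : Tendsto (fun t : ℝ => l * t) atTop atTop :=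
    Tendsto.const_mul_atTop hl tendsto_id
  have T1 : Tendsto (fun t => fS (l*t) / (fX (l*t) + fY (l*t))) atTop (nhds 1) :=
    hconc1.comp hlt
  have T2 := hg l hl
  have T3 : Tendsto (fun t => (fX t + fY t) / fS t) atTop (nhds 1) := by
    have h := hconc1.inv₀ one_ne_zero
    rw [inv_one] at h
    exact h.congr fun t => inv_div _ _
  have hT := (T1.mul T2).mul T3
  rw [one_mul, mul_one] at hT
  refine hT.congr' ?_
  filter_upwards [eventually_gt_atTop (0:ℝ)] with t ht
  have h1 : fX t + fY t ≠ 0 := (hgpos t ht).ne'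
  have h2 : fX (l*t) + fY (l*t) ≠ 0 := (hgpos _ (mul_pos hl ht)).ne'
  have h3 : fS t ≠ 0 := (hfSpos t ht).ne'
  field_simp
end

section
/- Let $F$ be a distribution function whose survival function is regularly varying: $1 - F(x) = x^{-\alpha}L(x)$ with $\alpha > 0$ and $L$ slowly varying. Then $F$ lies in the maximum domain of attraction of the Fréchet distribution $\Phi_\alpha$: there exist constants $c_N > 0$ such that $F^N(c_N x) \to \exp(-x^{-\alpha})$ for every $x > 0$, where one may take $c_N = \inf\{x : 1 - F(x) \le 1/N\}$. -/
open Filter Set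

/-- Survival function `1 - F`. -/
noncomputable def mdaSurv (F : ℝ → ℝ) (t : ℝ) : ℝ := 1 - F t

/-- Gnedenko characterization of the Fréchet maximum domain of attraction:
if the survival function `1 - F(x) = x^{-α} L(x)` is regularly varying with
index `-α`, then with `c_N = inf {x | 1 - F(x) ≤ 1/N}` (the `(1-1/N)`-quantile)
one has `F^N(c_N x) → exp(-x^{-α})` for every `x > 0`. -/
theorem mda_frechet_of_regularly_varying_tail
    (F : ℝ → ℝ) (hFmono : Monotone F)
    (hF0 : ∀ x, 0 ≤ F x) (hF1 : ∀ x, F x ≤ 1)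
    (hFtop : Tendsto F atTop (nhds 1))
    (α : ℝ) (hα : 0 < α)
    (L : ℝ → ℝ) (hLpos : ∀ t > 0, 0 < L t)
    (hSV : ∀ l > 0, Tendsto (fun t => L (l * t) / L t) atTop (nhds 1))
    (htail : ∀ x > 0, 1 - F x = x ^ (-α) * L x)
    (c : ℕ → ℝ) (hc : ∀ N, c N = sInf {x : ℝ | 1 - F x ≤ 1 / N}) :
    ∀ x > 0,
      Tendsto (fun N : ℕ => (F (c N * x)) ^ N) atTop
        (nhds (Real.exp (-x ^ (-α)))) := by
  intro x hx
  set S := mdaSurv F with hSdef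
  have hSeq : ∀ t, S t = 1 - F t := fun t => rfl
  have hSpos : ∀ t > 0, 0 < S t := by
    intro t ht
    rw [hSeq, htail t ht]
    exact mul_pos (Real.rpow_pos_of_pos ht _) (hLpos t ht)
  have hSanti : Antitone S := fun a b hab => by
    rw [hSeq, hSeq]
    linarith [hFmono hab]
  have hSnonneg : ∀ t, 0 ≤ S t := fun t => by
    rw [hSeq]; linarith [hF1 t]
  -- ratio limits from regular variation
  have R1 : ∀ u > 0, Tendsto (fun t => S (u * t) / S t) atTop (nhds (u ^ (-α))) := by
    intro u hu
    have h0 : Tendsto (fun t => u ^ (-α) * (L (u * t) / L t)) atTop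
        (nhds (u ^ (-α) * 1)) := tendsto_const_nhds.mul (hSV u hu)
    rw [mul_one] at h0
    refine h0.congr' ?_
    filter_upwards [eventually_gt_atTop (0 : ℝ)] with t ht
    have hut : 0 < u * t := mul_pos hu ht
    rw [hSeq, hSeq, htail _ hut, htail _ ht, Real.mul_rpow hu.le ht.le]
    have h1 : t ^ (-α) ≠ 0 := (Real.rpow_pos_of_pos ht _).ne'
    have h2 : L t ≠ 0 := (hLpos t ht).ne'
    field_simp
  have R2 : ∀ u > 0, ∀ v > 0,
      Tendsto (fun t => S (u * t) / S (v * t)) atTop (nhds (u ^ (-α) * v ^ α)) := by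
    intro u hu v hv
    have hvne : v ^ (-α) ≠ 0 := (Real.rpow_pos_of_pos hv _).ne'
    have hvα : (v : ℝ) ^ α ≠ 0 := (Real.rpow_pos_of_pos hv _).ne'
    have h0 := (R1 u hu).div (R1 v hv) hvne
    have heq : u ^ (-α) / v ^ (-α) = u ^ (-α) * v ^ α := by
      rw [Real.rpow_neg hv.le]
      field_simp
    rw [heq] at h0
    refine h0.congr' ?_
    filter_upwards [eventually_gt_atTop (0 : ℝ)] with t ht
    have hSt : S t ≠ 0 := (hSpos t ht).ne'
    have hSvt : S (v * t) ≠ 0 := (hSpos _ (mul_pos hv ht)).ne'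
    show S (u * t) / S t / (S (v * t) / S t) = S (u * t) / S (v * t)
    field_simp
  -- the quantile sets
  have hQ : ∀ N : ℕ, ∀ y, y ∈ {z : ℝ | 1 - F z ≤ 1 / (N : ℝ)} ↔ S y ≤ 1 / N := by
    intro N y
    constructor <;> { intro h; rw [hSeq] at *; exact h }
  have hne : ∀ᶠ N : ℕ in atTop, {z : ℝ | 1 - F z ≤ 1 / (N : ℝ)}.Nonempty := by
    filter_upwards [eventually_ge_atTop 1] with N hN
    have hNpos : (0 : ℝ) < N := by exact_mod_cast hN
    have h1N : (0 : ℝ) < 1 / N := by positivity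
    have : ∀ᶠ z in atTop, 1 - 1 / (N : ℝ) < F z :=
      hFtop.eventually (eventually_gt_nhds (by linarith : 1 - 1 / (N : ℝ) < 1))
    obtain ⟨z, hz⟩ := this.exists
    exact ⟨z, by simp only [mem_setOf_eq]; linarith⟩
  have hlb : ∀ M > 0, ∀ᶠ N : ℕ in atTop,
      ∀ y ∈ {z : ℝ | 1 - F z ≤ 1 / (N : ℝ)}, M ≤ y := by
    intro M hM
    have h1 : ∀ᶠ N : ℕ in atTop, 1 / (N : ℝ) < S M :=
      tendsto_one_div_atTop_nhds_zero_nat.eventually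
        (eventually_lt_nhds (hSpos M hM))
    filter_upwards [h1] with N hN y hy
    by_contra hcon
    push_neg at hcon
    have h2 : S M ≤ S y := hSanti hcon.le
    have hy' : S y ≤ 1 / N := (hQ N y).1 hy
    linarith
  have hclb : ∀ M > 0, ∀ᶠ N : ℕ in atTop, M ≤ c N := by
    intro M hM
    filter_upwards [hlb M hM, hne] with N h1 h2
    rw [hc N]
    exact le_csInf h2 h1
  have hctop : Tendsto c atTop atTop := by
    rw [tendsto_atTop]
    intro M
    filter_upwards [hclb (max M 1) (by positivity)] with N hN
    exact le_trans (le_max_left _ _) hN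
  have hcpos : ∀ᶠ N : ℕ in atTop, 0 < c N := by
    filter_upwards [hclb 1 one_pos] with N hN; linarith
  -- upper tail bound: for m > 1, eventually S (m * c N) ≤ 1/N
  have hD : ∀ m, 1 < m → ∀ᶠ N : ℕ in atTop, S (m * c N) ≤ 1 / (N : ℝ) := by
    intro m hm
    filter_upwards [hcpos, hne] with N hcN hneN
    have hlt : c N < m * c N := (lt_mul_iff_one_lt_left hcN).2 hm
    have hlt' : sInf {z : ℝ | 1 - F z ≤ 1 / (N : ℝ)} < m * c N := by
      rw [← hc N]; exact hlt
    obtain ⟨y, hy, hylt⟩ := exists_lt_of_csInf_lt hneN hlt'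
    exact le_trans (hSanti hylt.le) ((hQ N y).1 hy)
  -- lower tail bound: for 0 < m < 1, eventually 1/N < S (m * c N)
  have hE : ∀ m, 0 < m → m < 1 → ∀ᶠ N : ℕ in atTop, 1 / (N : ℝ) < S (m * c N) := by
    intro m hm0 hm1
    filter_upwards [hcpos, hlb 1 one_pos] with N hcN hlbN
    by_contra hcon
    push_neg at hcon
    have hmem : m * c N ∈ {z : ℝ | 1 - F z ≤ 1 / (N : ℝ)} := (hQ N _).2 hcon
    have hbdd : BddBelow {z : ℝ | 1 - F z ≤ 1 / (N : ℝ)} := ⟨1, fun y hy => hlbN y hy⟩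
    have h5 : c N ≤ m * c N := le_of_eq_of_le (hc N) (csInf_le hbdd hmem)
    nlinarith
  -- the key limit: N * S (x * c N) → x ^ (-α)
  have hg : Tendsto (fun N : ℕ => (N : ℝ) * S (x * c N)) atTop (nhds (x ^ (-α))) := by
    rw [tendsto_order]
    constructor
    · -- lower bound
      intro a ha
      obtain ⟨m, hm0, hm1, ham⟩ : ∃ m, 0 < m ∧ m < 1 ∧ a < x ^ (-α) * m ^ α := by
        rcases le_or_gt a 0 with h | h
        · refine ⟨1/2, by norm_num, by norm_num, ?_⟩
          have : 0 < x ^ (-α) * (1/2 : ℝ) ^ α :=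
            mul_pos (Real.rpow_pos_of_pos hx _) (Real.rpow_pos_of_pos (by norm_num) _)
          linarith
        · set b := (a * x ^ α) ^ α⁻¹ with hb
          have haxpos : 0 < a * x ^ α := mul_pos h (Real.rpow_pos_of_pos hx _)
          have hxa : x ^ (-α) * x ^ α = 1 := by
            rw [← Real.rpow_add hx]; simp
          have hax1 : a * x ^ α < 1 := by
            nlinarith [Real.rpow_pos_of_pos hx α]
          have hb0 : 0 < b := Real.rpow_pos_of_pos haxpos _
          have hb1 : b < 1 := by
            rw [hb]
            exact Real.rpow_lt_one haxpos.le hax1 (by positivity)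
          refine ⟨(b + 1) / 2, by linarith, by linarith, ?_⟩
          have hblt : b < (b + 1) / 2 := by linarith
          have hpow : b ^ α < ((b + 1) / 2) ^ α :=
            Real.rpow_lt_rpow hb0.le hblt hα
          have hbα : b ^ α = a * x ^ α := Real.rpow_inv_rpow haxpos.le hα.ne'
          have hxna : 0 < x ^ (-α) := Real.rpow_pos_of_pos hx _
          calc a = x ^ (-α) * (a * x ^ α) := by
                rw [mul_comm a, ← mul_assoc, hxa, one_mul]
            _ = x ^ (-α) * b ^ α := by rw [hbα]
            _ < x ^ (-α) * ((b + 1) / 2) ^ α := by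
                exact (mul_lt_mul_iff_right₀ hxna).2 hpow
      -- eventually a < ratio ≤ N * S (x * c N)
      have hratio := (R2 x hx m hm0).comp hctop
      have hev1 : ∀ᶠ N : ℕ in atTop, a < S (x * c N) / S (m * c N) :=
        hratio.eventually (eventually_gt_nhds ham)
      filter_upwards [hev1, hE m hm0 hm1, hcpos, eventually_ge_atTop 1] with N h1 h2 hcN hN1
      have hNpos : (0 : ℝ) < N := by exact_mod_cast hN1
      have hSm : 0 < S (m * c N) := hSpos _ (mul_pos hm0 hcN)
      have h3 : 1 / S (m * c N) < 1 / (1 / (N : ℝ)) :=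
        one_div_lt_one_div_of_lt (by positivity) h2
      rw [one_div_one_div] at h3
      have h4 : S (x * c N) / S (m * c N) ≤ (N : ℝ) * S (x * c N) := by
        rw [div_eq_inv_mul]
        exact mul_le_mul_of_nonneg_right
          (by rw [← one_div]; exact h3.le) (hSnonneg _)
      linarith
    · -- upper bound
      intro a ha
      obtain ⟨m, hm1, ham⟩ : ∃ m, 1 < m ∧ x ^ (-α) * m ^ α < a := by
        set b := (a * x ^ α) ^ α⁻¹ with hb
        have hxna : 0 < x ^ (-α) := Real.rpow_pos_of_pos hx _
        have hxa : x ^ (-α) * x ^ α = 1 := by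
          rw [← Real.rpow_add hx]; simp
        have hapos : 0 < a := lt_trans hxna ha
        have haxpos : 0 < a * x ^ α := mul_pos hapos (Real.rpow_pos_of_pos hx _)
        have hax1 : 1 < a * x ^ α := by
          nlinarith [Real.rpow_pos_of_pos hx α]
        have hb1 : 1 < b := by
          rw [hb]
          exact (Real.one_lt_rpow_iff_of_pos haxpos).2 (Or.inl ⟨hax1, by positivity⟩)
        refine ⟨(1 + b) / 2, by linarith, ?_⟩
        have hm0 : (0 : ℝ) < (1 + b) / 2 := by linarith
        have hblt : (1 + b) / 2 < b := by linarith
        have hpow : ((1 + b) / 2) ^ α < b ^ α :=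
          Real.rpow_lt_rpow hm0.le hblt hα
        have hbα : b ^ α = a * x ^ α := Real.rpow_inv_rpow haxpos.le hα.ne'
        calc x ^ (-α) * ((1 + b) / 2) ^ α < x ^ (-α) * b ^ α :=
              (mul_lt_mul_iff_right₀ hxna).2 hpow
          _ = x ^ (-α) * (a * x ^ α) := by rw [hbα]
          _ = a := by rw [mul_comm a, ← mul_assoc, hxa, one_mul]
      have hm0 : (0 : ℝ) < m := lt_trans one_pos hm1
      have hratio := (R2 x hx m hm0).comp hctop
      have hev1 : ∀ᶠ N : ℕ in atTop, S (x * c N) / S (m * c N) < a :=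
        hratio.eventually (eventually_lt_nhds ham)
      filter_upwards [hev1, hD m hm1, hcpos, eventually_ge_atTop 1] with N h1 h2 hcN hN1
      have hNpos : (0 : ℝ) < N := by exact_mod_cast hN1
      have hSm : 0 < S (m * c N) := hSpos _ (mul_pos hm0 hcN)
      have h3 : 1 / (1 / (N : ℝ)) ≤ 1 / S (m * c N) :=
        one_div_le_one_div_of_le hSm h2
      rw [one_div_one_div] at h3
      have h4 : (N : ℝ) * S (x * c N) ≤ S (x * c N) / S (m * c N) := by
        rw [div_eq_inv_mul]
        exact mul_le_mul_of_nonneg_right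
          (by rw [← one_div]; exact h3) (hSnonneg _)
      linarith
  -- s N → 0
  set s : ℕ → ℝ := fun N => S (x * c N) with hsdef
  have hs0 : Tendsto s atTop (nhds 0) := by
    have h1 : Tendsto (fun N : ℕ => ((N : ℝ))⁻¹ * ((N : ℝ) * s N)) atTop
        (nhds (0 * x ^ (-α))) :=
      Tendsto.mul (tendsto_inv_atTop_zero.comp tendsto_natCast_atTop_atTop) hg
    rw [zero_mul] at h1
    refine h1.congr' ?_
    filter_upwards [eventually_ge_atTop 1] with N hN
    have hNne : (N : ℝ) ≠ 0 := by positivity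
    show ((N : ℝ))⁻¹ * ((N : ℝ) * s N) = s N
    field_simp
  -- eventually F (x * c N) close to 1
  have hFev : ∀ᶠ N : ℕ in atTop, 1 / 2 < F (x * c N) :=
    (hctop.const_mul_atTop hx).eventually
      (hFtop.eventually (eventually_gt_nhds (by norm_num : (1:ℝ)/2 < 1)))
  have hspos : ∀ᶠ N : ℕ in atTop, 0 < s N := by
    filter_upwards [hcpos] with N hcN
    exact hSpos _ (mul_pos hx hcN)
  have hshalf : ∀ᶠ N : ℕ in atTop, s N < 1 / 2 := by
    filter_upwards [hFev] with N hN
    have : s N = 1 - F (x * c N) := hSeq _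
    linarith
  -- squeeze N * log (1 - s N) → -x^(-α)
  have hlog : Tendsto (fun N : ℕ => (N : ℝ) * Real.log (1 - s N)) atTop
      (nhds (-x ^ (-α))) := by
    have hup : Tendsto (fun N : ℕ => -((N : ℝ) * s N)) atTop (nhds (-x ^ (-α))) := hg.neg
    have hlow : Tendsto (fun N : ℕ => -((N : ℝ) * s N) / (1 - s N)) atTop
        (nhds (-x ^ (-α) / (1 - 0))) :=
      hg.neg.div (tendsto_const_nhds.sub hs0) (by norm_num)
    rw [sub_zero, div_one] at hlow
    refine tendsto_of_tendsto_of_tendsto_of_le_of_le' hlow hup ?_ ?_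
    · -- lower bound: -(N s)/(1-s) ≤ N log(1-s)
      filter_upwards [hspos, hshalf] with N h1 hs1
      have hpos : 0 < 1 - s N := by linarith
      have hlog1 : Real.log (1 - s N)⁻¹ ≤ (1 - s N)⁻¹ - 1 :=
        Real.log_le_sub_one_of_pos (by positivity)
      rw [Real.log_inv] at hlog1
      have heq1 : (1 - s N)⁻¹ - 1 = s N / (1 - s N) := by
        field_simp
        ring
      rw [heq1] at hlog1
      have hlb2 : -(s N / (1 - s N)) ≤ Real.log (1 - s N) := by linarith
      have hN0 : (0 : ℝ) ≤ N := Nat.cast_nonneg N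
      have hmul := mul_le_mul_of_nonneg_left hlb2 hN0
      calc -((N : ℝ) * s N) / (1 - s N) = (N : ℝ) * -(s N / (1 - s N)) := by
            field_simp
        _ ≤ (N : ℝ) * Real.log (1 - s N) := hmul
    · -- upper bound: N log(1-s) ≤ -(N s)
      filter_upwards [hspos, hshalf] with N h1 hs1
      have hpos : 0 < 1 - s N := by linarith
      have hub : Real.log (1 - s N) ≤ -s N := by
        have := Real.log_le_sub_one_of_pos hpos
        linarith
      have hN0 : (0 : ℝ) ≤ N := Nat.cast_nonneg N
      have hmul := mul_le_mul_of_nonneg_left hub hN0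
      calc (N : ℝ) * Real.log (1 - s N) ≤ (N : ℝ) * -s N := hmul
        _ = -((N : ℝ) * s N) := by ring
  -- conclude
  have hexp : Tendsto (fun N : ℕ => Real.exp ((N : ℝ) * Real.log (1 - s N))) atTop
      (nhds (Real.exp (-x ^ (-α)))) :=
    (Real.continuous_exp.tendsto _).comp hlog
  refine hexp.congr' ?_
  filter_upwards [hspos, hFev] with N h1 h2
  have hFx : 0 < F (x * c N) := by linarith
  have h1s : 1 - s N = F (x * c N) := by
    have : s N = 1 - F (x * c N) := hSeq _
    linarith
  rw [Real.exp_nat_mul, Real.exp_log (by rw [h1s]; exact hFx), h1s, mul_comm x (c N)]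
end
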